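/- Every n-qubit stabilizer state (pure or mixed) is n-partite non-chiral: there exists a Pauli string Q = Q₁ ⊗ ⋯ ⊗ Qₙ (each Qₓ ∈ {I,X,Y,Z}) such that Q ρ Q† = ρ*, where ρ* is complex conjugation in the computational basis. -/
import Mathlib


open Matrix Kronecker BigOperators
open scoped ComplexOrder

noncomputable section

/-- Entrywise complex conjugation of a matrix (in the fixed basis). -/
def conjM {α : Type*} (ρ : Matrix α α ℂ) : Matrix α α ℂ := ρ.map (starRingEnd ℂ)

/-- A matrix is unitary. -/
def IsUnitary {α : Type*} [Fintype α] [DecidableEq α] (U : Matrix α α ℂ) : Prop :=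
  U * Uᴴ = 1 ∧ Uᴴ * U = 1

/-- A density matrix: positive semidefinite with unit trace. -/
def IsDensity {α : Type*} [Fintype α] [DecidableEq α] (ρ : Matrix α α ℂ) : Prop :=
  ρ.PosSemidef ∧ ρ.trace = 1

/-- Partial trace over the second tensor factor. -/
def traceB {α β : Type*} [Fintype β] (ρ : Matrix (α × β) (α × β) ℂ) : Matrix α α ℂ :=
  fun a a' => ∑ b, ρ (a, b) (a', b)

/-- Partial trace over the first tensor factor. -/
def traceA {α β : Type*} [Fintype α] (ρ : Matrix (α × β) (α × β) ℂ) : Matrix β β ℂ :=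
  fun b b' => ∑ a, ρ (a, b) (a, b')

/-- The four single-qubit Pauli matrices `I, X, Y, Z`. -/
def pauli : Fin 4 → Matrix (Fin 2) (Fin 2) ℂ :=
  ![1, !![0, 1; 1, 0], !![0, -Complex.I; Complex.I, 0], !![1, 0; 0, -1]]

/-- A (phase-free) Pauli string `Q₁ ⊗ ⋯ ⊗ Qₙ` on `n` qubits. -/
def PauliString (n : ℕ) (f : Fin n → Fin 4) :
    Matrix (Fin n → Fin 2) (Fin n → Fin 2) ℂ :=
  fun i j => ∏ x, pauli (f x) (i x) (j x)

namespace Stmt12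

/-! ### Componentwise tensor products -/

abbrev Mtx (n : ℕ) := Matrix (Fin n → Fin 2) (Fin n → Fin 2) ℂ

/-- componentwise tensor product -/
def Tens {n : ℕ} (M : Fin n → Matrix (Fin 2) (Fin 2) ℂ) : Mtx n :=
  fun i j => ∏ x, M x (i x) (j x)

lemma pauliString_eq (n : ℕ) (f : Fin n → Fin 4) :
    PauliString n f = Tens (fun x => pauli (f x)) := rfl

lemma Tens_one {n : ℕ} : Tens (n := n) (fun _ => 1) = 1 := by
  ext i j
  simp only [Tens, Matrix.one_apply]
  rw [Finset.prod_boole]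
  simp [funext_iff]

lemma Tens_mul {n : ℕ} (M N : Fin n → Matrix (Fin 2) (Fin 2) ℂ) :
    Tens M * Tens N = Tens (fun x => M x * N x) := by
  ext i j
  simp only [Tens, Matrix.mul_apply]
  rw [Finset.prod_univ_sum (fun _ => (Finset.univ : Finset (Fin 2)))
      (fun x v => M x (i x) v * N x v (j x))]
  rw [Fintype.piFinset_univ]
  exact Finset.sum_congr rfl (fun m _ => Finset.prod_mul_distrib.symm)

lemma Tens_smul {n : ℕ} (z : Fin n → ℂ) (M : Fin n → Matrix (Fin 2) (Fin 2) ℂ) :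
    Tens (fun x => z x • M x) = (∏ x, z x) • Tens M := by
  ext i j
  simp only [Tens, Matrix.smul_apply, smul_eq_mul]
  rw [Finset.prod_mul_distrib]

lemma Tens_conj {n : ℕ} (M : Fin n → Matrix (Fin 2) (Fin 2) ℂ) :
    conjM (Tens M) = Tens (fun x => conjM (M x)) := by
  ext i j
  simp [conjM, Tens, map_prod]

lemma Tens_conjTranspose {n : ℕ} (M : Fin n → Matrix (Fin 2) (Fin 2) ℂ) :
    (Tens M)ᴴ = Tens (fun x => (M x)ᴴ) := by
  ext i j
  simp [Tens, Matrix.conjTranspose_apply, map_prod]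

/-! ### Single-qubit combinatorics -/

def xb : Fin 4 → ZMod 2 := ![0, 1, 1, 0]
def zb : Fin 4 → ZMod 2 := ![0, 0, 1, 1]
def dec (x z : ZMod 2) : Fin 4 :=
  if x = 0 then (if z = 0 then 0 else 3) else (if z = 0 then 1 else 2)
def pmul : Fin 4 → Fin 4 → Fin 4 := ![![0,1,2,3], ![1,0,3,2], ![2,3,0,1], ![3,2,1,0]]
def ph : Fin 4 → Fin 4 → ℂ :=
  ![![1,1,1,1], ![1,1,Complex.I,-Complex.I], ![1,-Complex.I,1,Complex.I],
    ![1,Complex.I,-Complex.I,1]]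
def χ (a : ZMod 2) : ℂ := if a = 0 then 1 else -1

lemma dec_xb_zb : ∀ a : Fin 4, dec (xb a) (zb a) = a := by decide
lemma xb_dec : ∀ x z : ZMod 2, xb (dec x z) = x := by decide
lemma zb_dec : ∀ x z : ZMod 2, zb (dec x z) = z := by decide
lemma xb_pmul : ∀ a b : Fin 4, xb (pmul a b) = xb a + xb b := by decide
lemma zb_pmul : ∀ a b : Fin 4, zb (pmul a b) = zb a + zb b := by decide
lemma dec_zero : dec 0 0 = 0 := by decide
lemma pmul_pmul_self : ∀ a b : Fin 4, pmul (pmul a b) a = b := by decide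
lemma pmul_self : ∀ a : Fin 4, pmul a a = 0 := by decide

lemma two_zmod : (2 : ZMod 2) = 0 := by decide
lemma one_zmod : (1 : ZMod 2) ≠ 0 := by decide
lemma zmod_cases : ∀ x : ZMod 2, x = 0 ∨ x = 1 := by decide
lemma oneone : (1 : ZMod 2) + 1 = 0 := by decide

lemma pauli_zero : pauli 0 = 1 := rfl

lemma pauli_herm (a : Fin 4) : (pauli a)ᴴ = pauli a := by
  fin_cases a <;>
    · ext i j
      fin_cases i <;> fin_cases j <;>
        simp [pauli, Matrix.conjTranspose_apply, Matrix.one_apply, Complex.ext_iff]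

lemma pauli_mul (a b : Fin 4) : pauli a * pauli b = ph a b • pauli (pmul a b) := by
  fin_cases a <;> fin_cases b <;>
    · ext i j
      fin_cases i <;> fin_cases j <;>
        · simp [pauli, ph, pmul, Matrix.mul_apply, Fin.sum_univ_two,
            Matrix.one_apply, Matrix.vecHead, Matrix.vecTail, Complex.ext_iff]
          try norm_num [Matrix.vecHead, Matrix.vecTail]

lemma χ_add (a b : ZMod 2) : χ (a + b) = χ a * χ b := by
  rcases zmod_cases a with ha | ha <;> rcases zmod_cases b with hb | hb <;>
    subst ha <;> subst hb <;> simp [χ, oneone, one_zmod]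

lemma χ_zero : χ 0 = 1 := rfl

lemma pauli_mul_self (a : Fin 4) : pauli a * pauli a = 1 := by
  rw [pauli_mul, pmul_self, pauli_zero]
  have : ph a a = 1 := by fin_cases a <;> norm_num [ph]
  rw [this, one_smul]

lemma conj_pauli (a : Fin 4) : conjM (pauli a) = χ (xb a * zb a) • pauli a := by
  fin_cases a <;>
    · ext i j
      fin_cases i <;> fin_cases j <;>
        simp [conjM, pauli, χ, xb, zb, two_zmod, one_zmod, Matrix.one_apply,
          Complex.ext_iff]

lemma pauli_sandwich (a b : Fin 4) :
    pauli a * pauli b * pauli a = χ (xb a * zb b + zb a * xb b) • pauli b := by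
  rw [pauli_mul a b, Matrix.smul_mul, pauli_mul, pmul_pmul_self, smul_smul]
  congr 1
  fin_cases a <;> fin_cases b <;>
    · simp [ph, pmul, χ, xb, zb, two_zmod, one_zmod, oneone,
        Matrix.vecHead, Matrix.vecTail, Complex.ext_iff]
      try norm_num [two_zmod, one_zmod, Complex.ext_iff]

lemma χ_sum {ι : Type*} (s : Finset ι) (e : ι → ZMod 2) :
    χ (∑ x ∈ s, e x) = ∏ x ∈ s, χ (e x) := by
  induction s using Finset.cons_induction with
  | empty => simp [χ_zero]
  | cons a s ha ih => rw [Finset.sum_cons, Finset.prod_cons, χ_add, ih]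

/-! ### List product lemmas -/

section Lists

variable {n : ℕ} {ι : Type*}

lemma smul_list_prod (l : List ι) (z : ι → ℂ) (F : ι → Mtx n) :
    (l.map fun i => z i • F i).prod = (l.map z).prod • (l.map F).prod := by
  induction l with
  | nil => simp
  | cons a l ih =>
    simp only [List.map_cons, List.prod_cons, ih, smul_mul_smul_comm]

lemma conj_list_prod (Q : Mtx n) (hQ : Q * Q = 1) (l : List ι) (F : ι → Mtx n) :
    Q * (l.map F).prod * Q = (l.map fun i => Q * F i * Q).prod := by
  have key : ∀ X : Mtx n, Q * (Q * X) = X := fun X => by rw [← mul_assoc, hQ, one_mul]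
  induction l with
  | nil => simpa using hQ
  | cons a l ih =>
    simp only [List.map_cons, List.prod_cons, ← ih]
    simp only [mul_assoc, key]

lemma conjM_list_prod (l : List ι) (F : ι → Mtx n) :
    conjM ((l.map F).prod) = (l.map fun i => conjM (F i)).prod := by
  have h : conjM (α := Fin n → Fin 2) = fun A => (starRingEnd ℂ).mapMatrix A := rfl
  rw [h]
  simp only [map_list_prod ((starRingEnd ℂ).mapMatrix (m := Fin n → Fin 2)), List.map_map]
  rfl

lemma Tens_list_prod (l : List ι) (M : ι → Fin n → Matrix (Fin 2) (Fin 2) ℂ) :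
    (l.map fun i => Tens (M i)).prod = Tens (fun x => (l.map fun i => M i x).prod) := by
  induction l with
  | nil => simp only [List.map_nil, List.prod_nil]; exact Tens_one.symm
  | cons a l ih =>
      simp only [List.map_cons, List.prod_cons, ih, Tens_mul]

lemma pauli_list_prod (l : List (Fin 4)) :
    ∃ z : ℂ, (l.map pauli).prod = z • pauli (dec (l.map xb).sum (l.map zb).sum) := by
  induction l with
  | nil => exact ⟨1, by simp [dec_zero, pauli_zero]⟩
  | cons a l ih =>
    obtain ⟨z, hz⟩ := ih
    refine ⟨ph a (dec (l.map xb).sum (l.map zb).sum) * z, ?_⟩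
    rw [List.map_cons, List.prod_cons, hz, Matrix.mul_smul, pauli_mul, smul_smul]
    rw [show pmul a (dec (l.map xb).sum (l.map zb).sum)
        = dec (xb a + (l.map xb).sum) (zb a + (l.map zb).sum) by
      rw [← dec_xb_zb (pmul a (dec (l.map xb).sum (l.map zb).sum)),
        xb_pmul, zb_pmul, xb_dec, zb_dec]]
    rw [List.map_cons, List.map_cons, List.sum_cons, List.sum_cons]
    ring_nf

end Lists

/-! ### Solvability of the linear system -/

def Lmap {n k : ℕ} (E F : Fin k → Fin n → ZMod 2) :
    ((Fin n → ZMod 2) × (Fin n → ZMod 2)) →ₗ[ZMod 2] (Fin k → ZMod 2) where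
  toFun p := fun i => ∑ x, (p.1 x * E i x + p.2 x * F i x)
  map_add' p q := by
    funext i
    simp only [Prod.fst_add, Prod.snd_add, Pi.add_apply]
    rw [← Finset.sum_add_distrib]
    exact Finset.sum_congr rfl fun x _ => by ring
  map_smul' m p := by
    funext i
    simp only [Prod.smul_fst, Prod.smul_snd, Pi.smul_apply, smul_eq_mul,
      RingHom.id_apply]
    rw [Finset.mul_sum]
    exact Finset.sum_congr rfl fun x _ => by ring

lemma exists_solution {n k : ℕ} (E F : Fin k → Fin n → ZMod 2) (b : Fin k → ZMod 2)
    (hprop : ∀ t : Fin k → ZMod 2,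
      (∀ x, ∑ i, t i * E i x = 0) → (∀ x, ∑ i, t i * F i x = 0) →
      ∑ i, t i * b i = 0) :
    ∃ u w : Fin n → ZMod 2, ∀ i, ∑ x, (u x * E i x + w x * F i x) = b i := by
  by_cases hb : b ∈ LinearMap.range (Lmap E F)
  · obtain ⟨⟨u, w⟩, h⟩ := hb
    exact ⟨u, w, fun i => congrFun h i⟩
  · exfalso
    obtain ⟨φ, hφb, hmap⟩ :=
      Submodule.exists_dual_map_eq_bot_of_notMem hb inferInstance
    set t : Fin k → ZMod 2 := fun i => φ (fun j => if i = j then 1 else 0) with ht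
    have hφ : ∀ v : Fin k → ZMod 2, φ v = ∑ i, v i * t i := by
      intro v
      rw [LinearMap.pi_apply_eq_sum_univ φ v]
      exact Finset.sum_congr rfl fun i _ => by rw [smul_eq_mul]
    have hker : ∀ p, φ (Lmap E F p) = 0 := by
      intro p
      have : φ (Lmap E F p) ∈ Submodule.map φ (LinearMap.range (Lmap E F)) :=
        Submodule.mem_map_of_mem (LinearMap.mem_range_self _ p)
      rw [hmap] at this
      exact (Submodule.mem_bot _).mp this
    have hE : ∀ x₀, ∑ i, t i * E i x₀ = 0 := by
      intro x₀
      have h0 := hker (Pi.single x₀ 1, 0)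
      rw [hφ] at h0
      have : ∀ i : Fin k, (Lmap E F (Pi.single x₀ 1, 0)) i = E i x₀ := by
        intro i
        simp only [Lmap, LinearMap.coe_mk, AddHom.coe_mk]
        simp [Pi.single_apply, ite_mul, Finset.sum_ite_eq']
      rw [Finset.sum_congr rfl fun i _ => by rw [this i]] at h0
      rw [← h0]
      exact Finset.sum_congr rfl fun i _ => mul_comm _ _
    have hF : ∀ x₀, ∑ i, t i * F i x₀ = 0 := by
      intro x₀
      have h0 := hker (0, Pi.single x₀ 1)
      rw [hφ] at h0
      have : ∀ i : Fin k, (Lmap E F (0, Pi.single x₀ 1)) i = F i x₀ := by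
        intro i
        simp only [Lmap, LinearMap.coe_mk, AddHom.coe_mk]
        simp [Pi.single_apply, ite_mul, Finset.sum_ite_eq']
      rw [Finset.sum_congr rfl fun i _ => by rw [this i]] at h0
      rw [← h0]
      exact Finset.sum_congr rfl fun i _ => mul_comm _ _
    have := hprop t hE hF
    apply hφb
    rw [hφ b, ← this]
    exact Finset.sum_congr rfl fun i _ => mul_comm _ _

lemma conjM_one {n : ℕ} : conjM (1 : Mtx n) = 1 := by
  ext i j
  simp [conjM, Matrix.one_apply, apply_ite]

lemma conjM_add {n : ℕ} (A B : Mtx n) : conjM (A + B) = conjM A + conjM B := by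
  ext i j; simp [conjM]

lemma conjM_smul {n : ℕ} (z : ℂ) (A : Mtx n) :
    conjM (z • A) = (starRingEnd ℂ) z • conjM A := by
  ext i j; simp [conjM]

end Stmt12

open Stmt12

theorem stmt_12 {n k : ℕ} (c : Fin k → ℂ) (hc : ∀ i, c i = 1 ∨ c i = -1)
    (f : Fin k → Fin n → Fin 4)
    (S : Fin k → Matrix (Fin n → Fin 2) (Fin n → Fin 2) ℂ)
    (hS : ∀ i, S i = c i • PauliString n (f i))
    (hcomm : ∀ i j, S i * S j = S j * S i)
    (hsq : ∀ i, S i * S i = 1)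
    (hind : ∀ v : Fin k → ZMod 2,
      (∃ z : ℂ, ((List.finRange k).map fun i => S i ^ (v i).val).prod
          = z • (1 : Matrix (Fin n → Fin 2) (Fin n → Fin 2) ℂ)) → v = 0)
    (ρ : Matrix (Fin n → Fin 2) (Fin n → Fin 2) ℂ)
    (hρ : ρ = ((2 : ℂ) ^ n)⁻¹ • ((List.finRange k).map fun i => 1 + S i).prod) :
    ∃ g : Fin n → Fin 4,
      PauliString n g * ρ * (PauliString n g)ᴴ = conjM ρ := by
  classical
  -- Step 1: solve the linear system over ZMod 2
  have hprop : ∀ t : Fin k → ZMod 2,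
      (∀ x, ∑ i, t i * (fun i x => zb (f i x)) i x = 0) →
      (∀ x, ∑ i, t i * (fun i x => xb (f i x)) i x = 0) →
      ∑ i, t i * (fun i => ∑ x, xb (f i x) * zb (f i x)) i = 0 := by
    intro t hz hx
    -- show the product of S i ^ (t i).val is a scalar, hence t = 0 by hind
    have ht0 : t = 0 := by
      apply hind
      set a : Fin k → Fin n → Fin 4 :=
        fun i x => dec (t i * xb (f i x)) (t i * zb (f i x)) with ha
      have hpow : ∀ i : Fin k,
          S i ^ (t i).val = (c i ^ (t i).val) • Tens (fun x => pauli (a i x)) := by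
        intro i
        rcases zmod_cases (t i) with h | h <;> rw [h]
        · simp only [ZMod.val_zero, pow_zero, one_smul]
          rw [show (fun x => pauli (a i x)) = fun _ => (1 : Matrix (Fin 2) (Fin 2) ℂ) by
            funext x
            rw [ha]
            simp only [h, zero_mul, dec_zero, pauli_zero]]
          exact Tens_one.symm
        · simp only [ZMod.val_one, pow_one]
          rw [hS i, pauliString_eq]
          congr 1
          funext x
          rw [ha]
          simp only [h, one_mul, dec_xb_zb]
      rw [show ((List.finRange k).map fun i => S i ^ (t i).val)
          = (List.finRange k).map fun i =>
              (c i ^ (t i).val) • Tens (fun x => pauli (a i x)) from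
        List.map_congr_left fun i _ => hpow i]
      rw [smul_list_prod, Tens_list_prod]
      -- per-qubit products are scalars
      have hq : ∀ x : Fin n, ∃ zx : ℂ,
          ((List.finRange k).map fun i => pauli (a i x)).prod
            = zx • (1 : Matrix (Fin 2) (Fin 2) ℂ) := by
        intro x
        have hmm : ((List.finRange k).map fun i => pauli (a i x))
            = ((List.finRange k).map fun i => a i x).map pauli := by
          rw [List.map_map]; rfl
        obtain ⟨zx, hzx⟩ := pauli_list_prod ((List.finRange k).map fun i => a i x)
        refine ⟨zx, ?_⟩
        rw [hmm, hzx]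
        have hxs : (((List.finRange k).map fun i => a i x).map xb).sum = 0 := by
          rw [List.map_map]
          rw [show (xb ∘ fun i => a i x) = fun i => t i * xb (f i x) by
            funext i; simp [ha, xb_dec]]
          rw [← Fin.sum_univ_def]
          exact hx x
        have hzs : (((List.finRange k).map fun i => a i x).map zb).sum = 0 := by
          rw [List.map_map]
          rw [show (zb ∘ fun i => a i x) = fun i => t i * zb (f i x) by
            funext i; simp [ha, zb_dec]]
          rw [← Fin.sum_univ_def]
          exact hz x
        rw [hxs, hzs, dec_zero, pauli_zero]
      choose zx hzx using hq
      refine ⟨((List.finRange k).map fun i => c i ^ (t i).val).prod * ∏ x, zx x, ?_⟩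
      rw [show (fun x => ((List.finRange k).map fun i => pauli (a i x)).prod)
          = fun x => zx x • (1 : Matrix (Fin 2) (Fin 2) ℂ) from funext hzx]
      rw [Tens_smul, Tens_one, smul_smul]
    subst ht0
    simp
  obtain ⟨u, w, huw⟩ := exists_solution (fun i x => zb (f i x)) (fun i x => xb (f i x))
    (fun i => ∑ x, xb (f i x) * zb (f i x)) hprop
  -- Step 2: the conjugating Pauli string
  refine ⟨fun x => dec (u x) (w x), ?_⟩
  set g : Fin n → Fin 4 := fun x => dec (u x) (w x) with hg
  set Q : Mtx n := PauliString n g with hQdef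
  have hQT : Q = Tens (fun x => pauli (g x)) := pauliString_eq n g
  have hQQ : Q * Q = 1 := by
    rw [hQT, Tens_mul]
    rw [show (fun x => pauli (g x) * pauli (g x))
        = fun _ => (1 : Matrix (Fin 2) (Fin 2) ℂ) from
      funext fun x => pauli_mul_self (g x)]
    exact Tens_one
  have hQH : Qᴴ = Q := by
    rw [hQT, Tens_conjTranspose,
      show (fun x => (pauli (g x))ᴴ) = fun x => pauli (g x) from
        funext fun x => pauli_herm (g x)]
  rw [hQH, hρ]
  rw [Matrix.mul_smul, Matrix.smul_mul, conjM_smul]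
  rw [show (starRingEnd ℂ) ((2 : ℂ) ^ n)⁻¹ = ((2 : ℂ) ^ n)⁻¹ by
    rw [map_inv₀, map_pow, Complex.conj_ofNat]]
  congr 1
  have key2 : ∀ i : Fin k, Q * (1 + S i) * Q = conjM (1 + S i) := ?_
  · rw [conj_list_prod Q hQQ, conjM_list_prod,
      show (fun i => Q * (1 + S i) * Q) = fun i => conjM (1 + S i) from funext key2]
  intro i
  -- per-stabilizer identity
  have key : Q * S i * Q = conjM (S i) := by
    rw [hS i, pauliString_eq, Matrix.mul_smul, Matrix.smul_mul, conjM_smul]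
    rw [show (starRingEnd ℂ) (c i) = c i by rcases hc i with h | h <;> rw [h] <;> simp]
    congr 1
    rw [hQT, Tens_mul, Tens_mul, Tens_conj]
    rw [show (fun x => pauli (g x) * pauli (f i x) * pauli (g x))
        = fun x => χ (u x * zb (f i x) + w x * xb (f i x)) • pauli (f i x) by
      funext x
      rw [pauli_sandwich, hg]
      simp only [xb_dec, zb_dec]]
    rw [show (fun x => conjM (pauli (f i x)))
        = fun x => χ (xb (f i x) * zb (f i x)) • pauli (f i x) from
      funext fun x => conj_pauli (f i x)]
    rw [Tens_smul, Tens_smul]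
    congr 1
    rw [← χ_sum, ← χ_sum]
    congr 1
    exact huw i
  rw [mul_add, mul_one, add_mul, hQQ, conjM_add, conjM_one, key]
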